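/- If G is a minimally 2-edge-connected (multi)graph and u and v are adjacent vertices of G, then the maximum number of edge-disjoint u–v paths in G is exactly 2. -/

import Mathlib

/-- A multigraph on vertex type `V` with edge type `E`: each edge has an unordered pair
of endvertices. -/
structure Multigraph (V : Type) (E : Type) where
  ends : E → Sym2 V

namespace Multigraph

variable {V E : Type}

/-- Walks in a multigraph. -/
inductive Walk (G : Multigraph V E) : V → V → Type
  | nil (v : V) : Walk G v v
  | cons {u v w : V} (e : E) (h : G.ends e = s(u, v)) (p : Walk G v w) : Walk G u w

namespace Walk

variable {G : Multigraph V E}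

/-- The list of vertices visited by a walk. -/
def support : ∀ {u v : V}, G.Walk u v → List V
  | _, _, .nil v => [v]
  | u, _, .cons _ _ p => u :: p.support

/-- The list of edges used by a walk. -/
def edges : ∀ {u v : V}, G.Walk u v → List E
  | _, _, .nil _ => []
  | _, _, .cons e _ p => e :: p.edges

end Walk

/-- There is a `u`–`v` walk all of whose edges lie in `B` and all of whose vertices lie in `S`. -/
def ReachableIn (G : Multigraph V E) (S : Set V) (B : Set E) (u v : V) : Prop :=
  ∃ p : G.Walk u v, (∀ e ∈ p.edges, e ∈ B) ∧ ∀ w ∈ p.support, w ∈ S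

/-- The subgraph with vertex set `S` and edge set `B` is connected. -/
def ConnectedOn (G : Multigraph V E) (S : Set V) (B : Set E) : Prop :=
  S.Nonempty ∧ ∀ u ∈ S, ∀ v ∈ S, G.ReachableIn S B u v

/-- The subgraph `(S, B)` has edge-connectivity at least `k`: removing fewer than `k`
edges of `B` never disconnects it. -/
def EdgeConnAtLeastOn (G : Multigraph V E) (S : Set V) (B : Set E) (k : ℕ) : Prop :=
  ∀ F : Finset E, ↑F ⊆ B → F.card < k →
    ∀ u ∈ S, ∀ v ∈ S, G.ReachableIn S (B \ ↑F) u v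

/-- The subgraph `(S, B)` is minimally `2`-edge-connected: its edge-connectivity equals `2`
and deleting any edge decreases the edge-connectivity below `2`. -/
def MinTwoEdgeConnOn (G : Multigraph V E) (S : Set V) (B : Set E) : Prop :=
  G.EdgeConnAtLeastOn S B 2 ∧ ¬ G.EdgeConnAtLeastOn S B 3 ∧
    ∀ e ∈ B, ¬ G.EdgeConnAtLeastOn S (B \ {e}) 2

/-- `G` is minimally `2`-edge-connected. -/
def MinTwoEdgeConn (G : Multigraph V E) : Prop :=
  G.MinTwoEdgeConnOn Set.univ Set.univ

/-- `λ_G(u,v)`: the maximum number of pairwise edge-disjoint `u`–`v` paths in `G`. -/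
noncomputable def lambda (G : Multigraph V E) (u v : V) : ℕ :=
  sSup {k | ∃ p : Fin k → G.Walk u v, (∀ i, (p i).support.Nodup) ∧
    ∀ i j, i ≠ j → ∀ e ∈ (p i).edges, e ∉ (p j).edges}

/-- `κ_G(u,v)`: the maximum number of pairwise internally disjoint `u`–`v` paths in `G`. -/
noncomputable def kappa (G : Multigraph V E) (u v : V) : ℕ :=
  sSup {k | ∃ p : Fin k → G.Walk u v, (∀ i, (p i).support.Nodup) ∧
    ∀ i j, i ≠ j →
      ((∀ w ∈ (p i).support, w ∈ (p j).support → w = u ∨ w = v) ∧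
        ∀ e ∈ (p i).edges, e ∉ (p j).edges)}

open Classical in
/-- The degree of a vertex: the number of edges incident with it. -/
noncomputable def degree (G : Multigraph V E) [Fintype E] (v : V) : ℕ :=
  (Finset.univ.filter fun e => v ∈ G.ends e).card

/-- The average edge-connectivity of `G`: the average of `λ_G(u,v)` over all unordered pairs
of distinct vertices (computed as the sum over ordered pairs divided by `n(n-1)`). -/
noncomputable def avgLambda (G : Multigraph V E) [Fintype V] [DecidableEq V] : ℚ :=
  (∑ p ∈ Finset.univ.offDiag, (G.lambda p.1 p.2 : ℚ)) /
    ((Fintype.card V : ℚ) * ((Fintype.card V : ℚ) - 1))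

/-- `G` is `2`-connected: it has at least three vertices, and deleting any single vertex
leaves a connected graph. -/
def TwoConnected (G : Multigraph V E) [Fintype V] : Prop :=
  3 ≤ Fintype.card V ∧ ∀ x u v : V, u ≠ x → v ≠ x → G.ReachableIn {x}ᶜ Set.univ u v

/-- `f` is a bridge of the spanning subgraph with edge set `B`: its removal separates
its endvertices. -/
def IsBridgeOn (G : Multigraph V E) (B : Set E) (f : E) : Prop :=
  f ∈ B ∧ ∀ x y, G.ends f = s(x, y) → ¬ G.ReachableIn Set.univ (B \ {f}) x y

/-- All endvertices of edges of `B` lie in `S`. -/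
def IsSubgraphPair (G : Multigraph V E) (S : Set V) (B : Set E) : Prop :=
  ∀ e ∈ B, ∀ x, x ∈ G.ends e → x ∈ S

/-- The subgraph `(S, B)` has no cut vertex. -/
def NoCutVertexOn (G : Multigraph V E) (S : Set V) (B : Set E) : Prop :=
  ∀ x, ∀ u ∈ S, ∀ v ∈ S, u ≠ x → v ≠ x → G.ReachableIn (S \ {x}) B u v

/-- `(S, B)` is a block of `G`: a maximal connected subgraph without a cut vertex. -/
def IsBlock (G : Multigraph V E) (S : Set V) (B : Set E) : Prop :=
  G.IsSubgraphPair S B ∧ G.ConnectedOn S B ∧ G.NoCutVertexOn S B ∧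
    ∀ S' B', S ⊆ S' → B ⊆ B' → G.IsSubgraphPair S' B' → G.ConnectedOn S' B' →
      G.NoCutVertexOn S' B' → S' = S ∧ B' = B

end Multigraph

namespace Multigraph

variable {V E : Type} {G : Multigraph V E}

namespace Walk

/-- Concatenation of walks. -/
def append : ∀ {u v w : V}, G.Walk u v → G.Walk v w → G.Walk u w
  | _, _, _, .nil _, q => q
  | _, _, _, .cons e h p, q => .cons e h (p.append q)

lemma mem_edges_append {u v w : V} (p : G.Walk u v) (q : G.Walk v w) (f : E) :
    f ∈ (p.append q).edges ↔ f ∈ p.edges ∨ f ∈ q.edges := by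
  induction p with
  | nil => simp [append, edges]
  | cons e h p ih => simp [append, edges, ih, or_assoc]

/-- Reversal of a walk. -/
def reverse : ∀ {u v : V}, G.Walk u v → G.Walk v u
  | _, _, .nil v => .nil v
  | _, _, .cons e h p => p.reverse.append (.cons e (h.trans (Sym2.eq_swap)) (.nil _))

lemma mem_edges_reverse {u v : V} (p : G.Walk u v) (f : E) :
    f ∈ p.reverse.edges ↔ f ∈ p.edges := by
  induction p with
  | nil => simp [reverse]
  | cons e h p ih => simp [reverse, edges, mem_edges_append, ih, or_comm]

end Walk

lemma reachableIn_univ_iff {B : Set E} {x y : V} :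
    G.ReachableIn Set.univ B x y ↔ ∃ p : G.Walk x y, ∀ f ∈ p.edges, f ∈ B := by
  constructor
  · rintro ⟨p, hp, -⟩; exact ⟨p, hp⟩
  · rintro ⟨p, hp⟩; exact ⟨p, hp, fun _ _ => trivial⟩

lemma ReachableIn.mono {S : Set V} {B B' : Set E} {x y : V} (hBB : B ⊆ B')
    (h : G.ReachableIn S B x y) : G.ReachableIn S B' x y := by
  obtain ⟨p, h1, h2⟩ := h
  exact ⟨p, fun f hf => hBB (h1 f hf), h2⟩

/-- Replacing every use of the edge `e` in a walk by a detour. -/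
lemma splice {B : Set E} {u v : V} {e : E} (he : G.ends e = s(u, v))
    (W1 : G.Walk u v) (hW1 : ∀ f ∈ W1.edges, f ∈ B)
    (W2 : G.Walk v u) (hW2 : ∀ f ∈ W2.edges, f ∈ B) :
    ∀ {x y : V} (p : G.Walk x y), (∀ f ∈ p.edges, f = e ∨ f ∈ B) →
      ∃ q : G.Walk x y, ∀ f ∈ q.edges, f ∈ B := by
  intro x y p
  induction p with
  | nil w => exact fun _ => ⟨.nil w, by simp [Walk.edges]⟩
  | @cons a b c f hf p ih =>
    intro hp
    obtain ⟨q, hq⟩ := ih (fun g hg => hp g (by simp [Walk.edges, hg]))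
    rcases hp f (by simp [Walk.edges]) with rfl | hfB
    · -- f = e : ends e = s(a,b) and = s(u,v)
      rw [he] at hf
      rcases Sym2.eq_iff.mp hf with ⟨rfl, rfl⟩ | ⟨rfl, rfl⟩
      · exact ⟨W1.append q, fun g hg => by
          rcases (Walk.mem_edges_append _ _ _).mp hg with h' | h'
          · exact hW1 g h'
          · exact hq g h'⟩
      · exact ⟨W2.append q, fun g hg => by
          rcases (Walk.mem_edges_append _ _ _).mp hg with h' | h'
          · exact hW2 g h'
          · exact hq g h'⟩
    · exact ⟨.cons f hf q, fun g hg => by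
        rcases (by simpa [Walk.edges] using hg : g = f ∨ g ∈ q.edges) with rfl | h'
        · exact hfB
        · exact hq g h'⟩

/-- From a walk with nodup support, dropping an initial segment. -/
lemma exists_drop [DecidableEq V] : ∀ {a y : V} (q : G.Walk a y), q.support.Nodup →
    ∀ x, x ∈ q.support → ∃ r : G.Walk x y, r.support.Nodup ∧ ∀ f ∈ r.edges, f ∈ q.edges := by
  intro a y q
  induction q with
  | nil w =>
    intro _ x hx
    have : x = w := by simpa [Walk.support] using hx
    subst this
    exact ⟨.nil x, by simp [Walk.support], by simp [Walk.edges]⟩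
  | @cons a b c f hf q ih =>
    intro hnd x hx
    rcases (by simpa [Walk.support] using hx : x = a ∨ x ∈ q.support) with rfl | hx'
    · exact ⟨.cons f hf q, hnd, fun g hg => hg⟩
    · have hnd' : q.support.Nodup := by
        have h2 : (a :: q.support).Nodup := by simpa [Walk.support] using hnd
        exact h2.of_cons
      obtain ⟨r, hr1, hr2⟩ := ih hnd' x hx'
      exact ⟨r, hr1, fun g hg => by simp [Walk.edges, hr2 g hg]⟩

/-- Every walk contains a path (walk with nodup support) using a subset of its edges. -/
lemma exists_nodup [DecidableEq V] : ∀ {x y : V} (p : G.Walk x y),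
    ∃ q : G.Walk x y, q.support.Nodup ∧ ∀ f ∈ q.edges, f ∈ p.edges := by
  intro x y p
  induction p with
  | nil w => exact ⟨.nil w, by simp [Walk.support], by simp [Walk.edges]⟩
  | @cons a b c f hf p ih =>
    obtain ⟨q, hq1, hq2⟩ := ih
    by_cases hx : a ∈ q.support
    · obtain ⟨r, hr1, hr2⟩ := exists_drop q hq1 a hx
      exact ⟨r, hr1, fun g hg => by simp [Walk.edges, hq2 g (hr2 g hg)]⟩
    · exact ⟨.cons f hf q, by simp [Walk.support, hq1, hx],
        fun g hg => by
          rcases (by simpa [Walk.edges] using hg : g = f ∨ g ∈ q.edges) with rfl | h'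
          · simp [Walk.edges]
          · simp [Walk.edges, hq2 g h']⟩

end Multigraph

/-- If `G` is a minimally `2`-edge-connected multigraph and `u` and `v` are adjacent
(distinct) vertices, then `λ_G(u,v) = 2`. -/
theorem stmt_11 {V E : Type} [Fintype V] [Fintype E] (G : Multigraph V E)
    (h : G.MinTwoEdgeConn) (u v : V) (huv : u ≠ v)
    (e : E) (he : G.ends e = s(u, v)) :
    G.lambda u v = 2 := by
  classical
  obtain ⟨h2, -, hmin⟩ := h
  have hne := hmin e (Set.mem_univ e)
  rw [Multigraph.EdgeConnAtLeastOn] at hne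
  push_neg at hne
  obtain ⟨F, hFsub, hFcard, x, -, y, -, hxy⟩ := hne
  have hFcases : F = ∅ ∨ ∃ g, F = {g} := by
    have : F.card = 0 ∨ F.card = 1 := by omega
    rcases this with h0 | h1
    · exact Or.inl (Finset.card_eq_zero.mp h0)
    · exact Or.inr (Finset.card_eq_one.mp h1)
  rcases hFcases with rfl | ⟨g, rfl⟩
  · -- no cut at all: contradicts 2-edge-connectivity
    have : G.ReachableIn Set.univ (Set.univ \ ↑({e} : Finset E)) x y :=
      h2 {e} (by simp) (by simp) x trivial y trivial
    exact absurd (this.mono (by simp)) hxy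
  have hge : g ≠ e := by
    have := hFsub (by simp : g ∈ (↑({g} : Finset E) : Set E))
    simpa using this.2
  set B : Set E := {f | f ≠ e ∧ f ≠ g} with hB
  -- the pair {e, g} separates u from v
  have key : ¬ G.ReachableIn Set.univ B u v := by
    intro hRuv
    obtain ⟨W1, hW1⟩ := Multigraph.reachableIn_univ_iff.mp hRuv
    have hxy2 : G.ReachableIn Set.univ (Set.univ \ ↑({g} : Finset E)) x y :=
      h2 {g} (by simp) (by simp) x trivial y trivial
    obtain ⟨P, hP⟩ := Multigraph.reachableIn_univ_iff.mp hxy2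
    have hP' : ∀ f ∈ P.edges, f = e ∨ f ∈ B := by
      intro f hf
      have hg : f ≠ g := by simpa using (hP f hf).2
      by_cases hfe : f = e
      · exact Or.inl hfe
      · exact Or.inr ⟨hfe, hg⟩
    obtain ⟨Q, hQ⟩ := Multigraph.splice he W1 hW1 W1.reverse
      (fun f hf => hW1 f ((Multigraph.Walk.mem_edges_reverse _ _).mp hf)) P hP'
    refine hxy ((Multigraph.reachableIn_univ_iff.mpr ⟨Q, hQ⟩).mono ?_)
    intro f hf
    exact ⟨⟨trivial, hf.1⟩, by simpa using hf.2⟩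
  -- upper bound
  have hub : ∀ k ∈ {k | ∃ p : Fin k → G.Walk u v, (∀ i, (p i).support.Nodup) ∧
      ∀ i j, i ≠ j → ∀ f ∈ (p i).edges, f ∉ (p j).edges}, k ≤ 2 := by
    rintro k ⟨p, -, hdisj⟩
    by_contra hk
    push_neg at hk
    have hcross : ∀ i : Fin k, e ∈ (p i).edges ∨ g ∈ (p i).edges := by
      intro i
      by_contra hc
      push_neg at hc
      refine key (Multigraph.reachableIn_univ_iff.mpr ⟨p i, fun f hf => ⟨?_, ?_⟩⟩)
      · rintro rfl; exact hc.1 hf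
      · rintro rfl; exact hc.2 hf
    have hk0 : 0 < k := by omega
    have hk1 : 1 < k := by omega
    have hk2 : 2 < k := by omega
    rcases hcross ⟨0, hk0⟩ with h0 | h0 <;> rcases hcross ⟨1, hk1⟩ with h1 | h1 <;>
        rcases hcross ⟨2, hk2⟩ with h2 | h2 <;>
      first
      | exact hdisj ⟨0, hk0⟩ ⟨1, hk1⟩ (by simp) _ h0 h1
      | exact hdisj ⟨0, hk0⟩ ⟨2, hk2⟩ (by simp) _ h0 h2
      | exact hdisj ⟨1, hk1⟩ ⟨2, hk2⟩ (by simp) _ h1 h2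
  -- lower bound: two edge-disjoint paths
  have hxy3 : G.ReachableIn Set.univ (Set.univ \ ↑({e} : Finset E)) u v :=
    h2 {e} (by simp) (by simp) u trivial v trivial
  obtain ⟨P, hP⟩ := Multigraph.reachableIn_univ_iff.mp hxy3
  obtain ⟨Q, hQ1, hQ2⟩ := Multigraph.exists_nodup P
  have hQe : e ∉ Q.edges := by
    intro hf
    simpa using (hP e (hQ2 e hf)).2
  set p0 : G.Walk u v := .cons e he (.nil v) with hp0
  set pp : Fin 2 → G.Walk u v := fun i => if i.val = 0 then p0 else Q with hpp
  have hnodup : ∀ i, (pp i).support.Nodup := by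
    intro i
    by_cases hi : i.val = 0 <;>
      simp [hpp, hi, hp0, Multigraph.Walk.support, huv, hQ1, -Fin.val_eq_zero_iff]
  have hdis : ∀ i j, i ≠ j → ∀ f ∈ (pp i).edges, f ∉ (pp j).edges := by
    intro i j hij
    have hvne : i.val ≠ j.val := fun hh => hij (Fin.ext hh)
    by_cases hi : i.val = 0
    · have hj : ¬ j.val = 0 := by omega
      intro f hf
      have : f = e := by simpa [hpp, hi, hp0, Multigraph.Walk.edges, -Fin.val_eq_zero_iff] using hf
      subst this
      simpa [hpp, hj, -Fin.val_eq_zero_iff] using hQe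
    · have hj : j.val = 0 := by omega
      intro f hf
      have hfQ : f ∈ Q.edges := by simpa [hpp, hi, -Fin.val_eq_zero_iff] using hf
      simp only [hpp, hj, hp0, Multigraph.Walk.edges, if_pos rfl]
      simp only [if_true, Multigraph.Walk.edges, List.mem_cons, List.not_mem_nil, or_false]
      rintro rfl
      exact hQe hfQ
  have hmem2 : (2 : ℕ) ∈ {k | ∃ p : Fin k → G.Walk u v, (∀ i, (p i).support.Nodup) ∧
      ∀ i j, i ≠ j → ∀ f ∈ (p i).edges, f ∉ (p j).edges} := ⟨pp, hnodup, hdis⟩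
  have hmem0 : (0 : ℕ) ∈ {k | ∃ p : Fin k → G.Walk u v, (∀ i, (p i).support.Nodup) ∧
      ∀ i j, i ≠ j → ∀ f ∈ (p i).edges, f ∉ (p j).edges} :=
    ⟨fun i => i.elim0, fun i => i.elim0, fun i => i.elim0⟩
  unfold Multigraph.lambda
  exact le_antisymm (csSup_le ⟨0, hmem0⟩ hub) (le_csSup ⟨2, hub⟩ hmem2)
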